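/- If L₁ and L₂ are trace-class integral operators on a simple closed contour Γ such that the kernel L₁(η,η') extends analytically in η' to the inside of Γ, and L₂(η,η') extends analytically in both η and η' to the inside of Γ, then L₁L₂ = 0, L₂² = 0, tr L₂ = 0, and tr(L₁+L₂)ⁿ = tr L₁ⁿ for all n ≥ 1; hence det(I − (L₁+L₂)) = det(I − L₁). -/

import Mathlib

open Complex Metric Set Filter MeasureTheory intervalIntegral Topology

set_option linter.unusedVariables false
set_option maxHeartbeats 1000000

variable {ρ : ℝ}





/-- Addition under circle integral. -/
lemma cint_add {f g : ℂ → ℂ} {c : ℂ} {R : ℝ} (hf : CircleIntegrable f c R)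
    (hg : CircleIntegrable g c R) :
    (∮ z in C(c, R), (f z + g z)) = (∮ z in C(c, R), f z) + ∮ z in C(c, R), g z := by
  simp only [circleIntegral, smul_add, intervalIntegral.integral_add hf.out hg.out]

/-- Cauchy vanishing through an analytic extension. -/
lemma czero (hρ : 0 < ρ) {F f : ℂ → ℂ}
    (hd : DifferentiableOn ℂ f (ball 0 ρ))
    (hc : ContinuousOn f (closedBall 0 ρ))
    (heq : ∀ z ∈ sphere (0:ℂ) ρ, F z = f z) :
    (∮ z in C(0, ρ), F z) = 0 := by
  rw [circleIntegral.integral_congr hρ.le heq]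
  exact Complex.circleIntegral_eq_zero_of_differentiable_on_off_countable hρ.le
    Set.countable_empty hc
    (fun z hz => (hd z hz.1).differentiableAt (Metric.isOpen_ball.mem_nhds hz.1))

/-- Maximum modulus principle on the closed ball. -/
lemma maxmod (hρ : 0 < ρ) {f : ℂ → ℂ} (hf : DifferentiableOn ℂ f (closedBall 0 ρ)) {C : ℝ}
    (hC : ∀ z ∈ sphere (0:ℂ) ρ, ‖f z‖ ≤ C) {w : ℂ} (hw : w ∈ closedBall (0:ℂ) ρ) :
    ‖f w‖ ≤ C := by
  have hcl : closure (ball (0:ℂ) ρ) = closedBall 0 ρ := closure_ball (0:ℂ) hρ.ne'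
  have hd : DiffContOnCl ℂ f (ball 0 ρ) :=
    ⟨hf.mono ball_subset_closedBall, hcl ▸ hf.continuousOn⟩
  exact Complex.norm_le_of_forall_mem_frontier_norm_le isBounded_ball hd
    (by rwa [frontier_ball (0:ℂ) hρ.ne']) (hcl ▸ hw)

/-- First-variable section of a jointly continuous kernel. -/
lemma sec₁ {f : ℂ → ℂ → ℂ} {A B : Set ℂ}
    (hf : ContinuousOn (fun P : ℂ × ℂ => f P.1 P.2) (A ×ˢ B)) {s : ℂ} (hs : s ∈ B) :
    ContinuousOn (fun η => f η s) A :=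
  hf.comp (continuous_id.prodMk continuous_const).continuousOn (fun η hη => ⟨hη, hs⟩)

/-- Second-variable section of a jointly continuous kernel. -/
lemma sec₂ {f : ℂ → ℂ → ℂ} {A B : Set ℂ}
    (hf : ContinuousOn (fun P : ℂ × ℂ => f P.1 P.2) (A ×ˢ B)) {s : ℂ} (hs : s ∈ A) :
    ContinuousOn (fun η => f s η) B :=
  hf.comp (continuous_const.prodMk continuous_id).continuousOn (fun η hη => ⟨hs, hη⟩)




/-- Continuity of a circle integral in a parameter (dominated convergence). -/
lemma paramCont {X : Type*} [PseudoMetricSpace X] (hρ : 0 < ρ) {F : ℂ → X → ℂ} {T : Set X}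
    {B : ℝ}
    (hcw : ∀ ζ ∈ sphere (0:ℂ) ρ, ContinuousOn (F ζ) T)
    (hcζ : ∀ x ∈ T, ContinuousOn (fun ζ => F ζ x) (sphere (0:ℂ) ρ))
    (hB : ∀ ζ ∈ sphere (0:ℂ) ρ, ∀ x ∈ T, ‖F ζ x‖ ≤ B) :
    ContinuousOn (fun x => ∮ ζ in C(0, ρ), F ζ x) T := by
  intro x₀ hx₀
  have hmeas : ∀ x ∈ T, Continuous fun θ : ℝ =>
      deriv (circleMap 0 ρ) θ • F (circleMap 0 ρ θ) x := by
    intro x hx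
    have h1 : Continuous fun θ : ℝ => F (circleMap 0 ρ θ) x := by
      rw [← continuousOn_univ]
      exact (hcζ x hx).comp (continuous_circleMap 0 ρ).continuousOn
        (fun θ _ => circleMap_mem_sphere 0 hρ.le θ)
    simp only [deriv_circleMap]
    exact ((continuous_circleMap 0 ρ).mul continuous_const).smul h1
  have : Tendsto (fun x => ∮ ζ in C(0, ρ), F ζ x) (𝓝[T] x₀)
      (𝓝 (∮ ζ in C(0, ρ), F ζ x₀)) := by
    simp only [circleIntegral]
    apply intervalIntegral.tendsto_integral_filter_of_dominated_convergence
      (bound := fun _ => ρ * B)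
    · filter_upwards [self_mem_nhdsWithin] with x hx
      exact (hmeas x hx).aestronglyMeasurable
    · filter_upwards [self_mem_nhdsWithin] with x hx
      filter_upwards with θ _
      rw [norm_smul]
      have h1 : ‖deriv (circleMap 0 ρ) θ‖ = ρ := by
        simp [deriv_circleMap, abs_of_pos hρ]
      rw [h1]
      exact mul_le_mul_of_nonneg_left
        (hB _ (circleMap_mem_sphere 0 hρ.le θ) x hx) hρ.le
    · exact intervalIntegrable_const
    · filter_upwards with θ _
      exact ((hcw _ (circleMap_mem_sphere 0 hρ.le θ) x₀ hx₀)).tendsto.const_smul _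
  exact this



/-- Differentiability of a circle integral in a parameter. -/
lemma paramDiff {r : ℝ} (hρ : 0 < ρ) (hr : 0 < r) (hrρ : r < ρ) {F : ℂ → ℂ → ℂ} {B : ℝ}
    (hdiff : ∀ ζ ∈ sphere (0:ℂ) ρ, DifferentiableOn ℂ (F ζ) (ball 0 r))
    (hcζ : ∀ w ∈ ball (0:ℂ) r, ContinuousOn (fun ζ => F ζ w) (sphere (0:ℂ) ρ))
    (hB : ∀ ζ ∈ sphere (0:ℂ) ρ, ∀ w ∈ ball (0:ℂ) r, ‖F ζ w‖ ≤ B) :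
    DifferentiableOn ℂ (fun w => ∮ ζ in C(0, ρ), F ζ w) (ball 0 r) := by
  intro w₀ hw₀
  have hw₀' : ‖w₀‖ < r := by simpa [mem_ball, dist_zero_right] using hw₀
  set ε : ℝ := (r - ‖w₀‖) / 4 with hε
  have hε0 : 0 < ε := by rw [hε]; linarith
  -- any point of `ball w₀ (2ε)` is at distance `> ε` from the boundary of `ball 0 r`
  have hsub : ∀ x ∈ ball w₀ (2 * ε), closedBall x ε ⊆ ball 0 r := by
    intro x hx z hz
    simp only [mem_ball, mem_closedBall] at *
    have h1 : dist z (0:ℂ) ≤ dist z x + dist x w₀ + dist w₀ 0 := by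
      calc dist z (0:ℂ) ≤ dist z w₀ + dist w₀ 0 := dist_triangle _ _ _
        _ ≤ dist z x + dist x w₀ + dist w₀ 0 := by
            have := dist_triangle z x w₀; linarith
    have hw2 : dist w₀ (0:ℂ) = ‖w₀‖ := dist_zero_right w₀
    rw [hw2] at h1
    have hεdef : ε = (r - ‖w₀‖) / 4 := rfl
    linarith
  have hmemr : ∀ x ∈ ball w₀ (2 * ε), x ∈ ball (0:ℂ) r := fun x hx =>
    hsub x hx (mem_closedBall_self hε0.le)
  -- Cauchy estimate for the derivative
  have hderiv_bd : ∀ x ∈ ball w₀ (2 * ε), ∀ ζ ∈ sphere (0:ℂ) ρ,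
      ‖deriv (F ζ) x‖ ≤ B / ε := by
    intro x hx ζ hζ
    have hd : DiffContOnCl ℂ (F ζ) (ball x ε) :=
      ⟨(hdiff ζ hζ).mono ((ball_subset_closedBall).trans (hsub x hx)),
        (hdiff ζ hζ).continuousOn.mono ((closure_ball_subset_closedBall).trans (hsub x hx))⟩
    exact Complex.norm_deriv_le_of_forall_mem_sphere_norm_le hε0 hd
      (fun z hz => hB ζ hζ z (hsub x hx (sphere_subset_closedBall hz)))
  -- differentiability of the integrand in the parameter
  have hdiffAt : ∀ x ∈ ball w₀ (2 * ε), ∀ ζ ∈ sphere (0:ℂ) ρ,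
      HasDerivAt (F ζ) (deriv (F ζ) x) x := by
    intro x hx ζ hζ
    exact (((hdiff ζ hζ) x (hmemr x hx)).differentiableAt
      (Metric.isOpen_ball.mem_nhds (hmemr x hx))).hasDerivAt
  -- measurability of the derivative integrand at w₀ via difference quotients
  have hball2 : w₀ ∈ ball w₀ (2 * ε) := mem_ball_self (by linarith)
  have hAESM : AEStronglyMeasurable
      (fun θ : ℝ => deriv (circleMap 0 ρ) θ • deriv (F (circleMap 0 ρ θ)) w₀)
      (volume.restrict (Set.uIoc 0 (2 * Real.pi))) := by
    have keycont : ∀ w ∈ ball (0:ℂ) r, Continuous fun θ : ℝ => F (circleMap 0 ρ θ) w := by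
      intro w hw
      rw [← continuousOn_univ]
      exact (hcζ w hw).comp (continuous_circleMap 0 ρ).continuousOn
        (fun θ _ => circleMap_mem_sphere 0 hρ.le θ)
    have hu : ∀ n : ℕ, w₀ + ((ε / (n + 1) : ℝ) : ℂ) ∈ ball (0:ℂ) r := by
      intro n
      simp only [mem_ball, dist_zero_right]
      have h1 : (0:ℝ) < ε / (n+1) := by positivity
      have h2 : ε / (n+1) ≤ ε := by
        apply div_le_self hε0.le
        push_cast; linarith [Nat.cast_nonneg (α := ℝ) n]
      calc ‖w₀ + ((ε / (n + 1) : ℝ) : ℂ)‖ ≤ ‖w₀‖ + ‖((ε / (n + 1) : ℝ) : ℂ)‖ := norm_add_le _ _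
        _ ≤ ‖w₀‖ + ε := by
            simp only [Complex.norm_real, Real.norm_eq_abs, abs_of_pos h1]
            linarith
        _ < r := by linarith
    have htend : ∀ θ : ℝ, Tendsto
        (fun n : ℕ => (((ε / (n + 1) : ℝ) : ℂ))⁻¹ •
          (F (circleMap 0 ρ θ) (w₀ + ((ε / (n + 1) : ℝ) : ℂ)) - F (circleMap 0 ρ θ) w₀))
        atTop (𝓝 (deriv (F (circleMap 0 ρ θ)) w₀)) := by
      intro θ
      have hder := hdiffAt w₀ hball2 _ (circleMap_mem_sphere 0 hρ.le θ)
      have hslope := hasDerivAt_iff_tendsto_slope.mp hder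
      have hseq : Tendsto (fun n : ℕ => w₀ + ((ε / (n + 1) : ℝ) : ℂ)) atTop (𝓝[≠] w₀) := by
        apply tendsto_nhdsWithin_of_tendsto_nhds_of_eventually_within
        · have : Tendsto (fun n : ℕ => (ε / (n + 1) : ℝ)) atTop (𝓝 0) := by
            have h0 : Tendsto (fun n : ℕ => 1 / ((n : ℝ) + 1)) atTop (𝓝 0) :=
              tendsto_one_div_add_atTop_nhds_zero_nat
            have h1 := h0.const_mul ε
            rw [mul_zero] at h1
            simpa [mul_one_div, div_add' , one_div, div_eq_mul_inv] using h1
          have := ((Complex.continuous_ofReal.tendsto 0).comp this)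
          simpa using tendsto_const_nhds.add this
        · filter_upwards with n
          simp only [mem_compl_iff, mem_singleton_iff]
          intro h
          have : ((ε / (n + 1) : ℝ) : ℂ) = 0 := by linear_combination h
          have h2 : (ε / (n+1) : ℝ) = 0 := by exact_mod_cast this
          have : (0:ℝ) < ε / (n+1) := by positivity
          linarith
      have := hslope.comp hseq
      convert this using 2 with n
      simp only [Function.comp_apply, slope_def_field, add_sub_cancel_left]
      rw [div_eq_inv_mul, smul_eq_mul]
      rw [mul_comm]
      rfl
    apply AEStronglyMeasurable.smul (f := fun θ : ℝ => deriv (circleMap 0 ρ) θ)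
      (g := fun θ => deriv (F (circleMap 0 ρ θ)) w₀)
    · exact (by simp only [deriv_circleMap]; exact
        ((continuous_circleMap 0 ρ).mul continuous_const) : Continuous
          fun θ : ℝ => deriv (circleMap 0 ρ) θ).aestronglyMeasurable
    · exact aestronglyMeasurable_of_tendsto_ae atTop
        (fun n => ((keycont _ (hu n)).sub (keycont _ (hmemr w₀ hball2))).const_smul
            (((ε / (n + 1) : ℝ) : ℂ))⁻¹ |>.aestronglyMeasurable)
        (Filter.Eventually.of_forall (fun θ => htend θ))
  -- the dominated-derivative theorem
  have main := intervalIntegral.hasDerivAt_integral_of_dominated_loc_of_deriv_le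
    (F := fun x θ => deriv (circleMap 0 ρ) θ • F (circleMap 0 ρ θ) x)
    (F' := fun x θ => deriv (circleMap 0 ρ) θ • deriv (F (circleMap 0 ρ θ)) x)
    (x₀ := w₀) (a := 0) (b := 2 * Real.pi) (μ := volume)
    (bound := fun _ => ρ * (B / ε)) (Metric.ball_mem_nhds w₀ (mul_pos two_pos hε0))
    ?_ ?_ hAESM ?_ intervalIntegrable_const ?_
  · exact main.2.differentiableAt.differentiableWithinAt
  · filter_upwards [Metric.ball_mem_nhds w₀ (mul_pos two_pos hε0)] with x hx
    have : Continuous fun θ : ℝ => deriv (circleMap 0 ρ) θ • F (circleMap 0 ρ θ) x := by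
      simp only [deriv_circleMap]
      refine ((continuous_circleMap 0 ρ).mul continuous_const).smul ?_
      rw [← continuousOn_univ]
      exact (hcζ x (hmemr x hx)).comp (continuous_circleMap 0 ρ).continuousOn
        (fun θ _ => circleMap_mem_sphere 0 hρ.le θ)
    exact this.aestronglyMeasurable
  · apply Continuous.intervalIntegrable
    simp only [deriv_circleMap]
    refine ((continuous_circleMap 0 ρ).mul continuous_const).smul ?_
    rw [← continuousOn_univ]
    exact (hcζ w₀ (hmemr w₀ hball2)).comp (continuous_circleMap 0 ρ).continuousOn
      (fun θ _ => circleMap_mem_sphere 0 hρ.le θ)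
  · filter_upwards with θ _ x hx
    rw [norm_smul]
    have h1 : ‖deriv (circleMap 0 ρ) θ‖ = ρ := by
      simp [deriv_circleMap, abs_of_pos hρ]
    rw [h1]
    exact mul_le_mul_of_nonneg_left
      (hderiv_bd x hx _ (circleMap_mem_sphere 0 hρ.le θ)) hρ.le
  · filter_upwards with θ _ x hx
    exact (hdiffAt x hx _ (circleMap_mem_sphere 0 hρ.le θ)).const_smul (deriv (circleMap 0 ρ) θ)

/-- `paramDiff` on the full ball. -/
lemma paramDiff' (hρ : 0 < ρ) {F : ℂ → ℂ → ℂ} {B : ℝ}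
    (hdiff : ∀ ζ ∈ sphere (0:ℂ) ρ, DifferentiableOn ℂ (F ζ) (ball 0 ρ))
    (hcζ : ∀ w ∈ ball (0:ℂ) ρ, ContinuousOn (fun ζ => F ζ w) (sphere (0:ℂ) ρ))
    (hB : ∀ ζ ∈ sphere (0:ℂ) ρ, ∀ w ∈ ball (0:ℂ) ρ, ‖F ζ w‖ ≤ B) :
    DifferentiableOn ℂ (fun w => ∮ ζ in C(0, ρ), F ζ w) (ball 0 ρ) := by
  intro w₀ hw₀
  have hw₀' : ‖w₀‖ < ρ := by simpa [mem_ball, dist_zero_right] using hw₀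
  set r : ℝ := (‖w₀‖ + ρ) / 2 with hrdef
  have hr : 0 < r := by positivity
  have hrρ : r < ρ := by rw [hrdef]; linarith
  have hball : ball (0:ℂ) r ⊆ ball 0 ρ := ball_subset_ball hrρ.le
  have := paramDiff hρ hr hrρ (fun ζ hζ => (hdiff ζ hζ).mono hball)
    (fun w hw => hcζ w (hball hw)) (fun ζ hζ w hw => hB ζ hζ w (hball hw))
  have hw₀r : w₀ ∈ ball (0:ℂ) r := by
    simp only [mem_ball, dist_zero_right]; rw [hrdef]; linarith
  exact ((this w₀ hw₀r).differentiableAt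
    (Metric.isOpen_ball.mem_nhds hw₀r)).differentiableWithinAt



/-- Fubini for double circle integrals of jointly continuous kernels. -/
lemma circleIntegral_swap (hρ : 0 < ρ) {f : ℂ → ℂ → ℂ}
    (hf : ContinuousOn (fun P : ℂ × ℂ => f P.1 P.2)
      (sphere (0:ℂ) ρ ×ˢ sphere (0:ℂ) ρ)) :
    (∮ η in C(0, ρ), ∮ s in C(0, ρ), f η s) = ∮ s in C(0, ρ), ∮ η in C(0, ρ), f η s := by
  have e := circleMap 0 ρ
  have hjoint : Continuous fun p : ℝ × ℝ =>
      deriv (circleMap 0 ρ) p.1 • deriv (circleMap 0 ρ) p.2 •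
        f (circleMap 0 ρ p.1) (circleMap 0 ρ p.2) := by
    simp only [deriv_circleMap]
    have hc : Continuous fun p : ℝ × ℝ => f (circleMap 0 ρ p.1) (circleMap 0 ρ p.2) := by
      rw [← continuousOn_univ]
      exact hf.comp (((continuous_circleMap 0 ρ).comp continuous_fst).prodMk
        ((continuous_circleMap 0 ρ).comp continuous_snd)).continuousOn
        (fun p _ => ⟨circleMap_mem_sphere 0 hρ.le _, circleMap_mem_sphere 0 hρ.le _⟩)
    exact (((continuous_circleMap 0 ρ).comp continuous_fst).mul continuous_const).smul
      ((((continuous_circleMap 0 ρ).comp continuous_snd).mul continuous_const).smul hc)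
  have key : (∫ θ in (0:ℝ)..(2*Real.pi), ∫ φ in (0:ℝ)..(2*Real.pi),
        deriv (circleMap 0 ρ) θ • deriv (circleMap 0 ρ) φ •
        f (circleMap 0 ρ θ) (circleMap 0 ρ φ))
      = ∫ φ in (0:ℝ)..(2*Real.pi), ∫ θ in (0:ℝ)..(2*Real.pi),
        deriv (circleMap 0 ρ) θ • deriv (circleMap 0 ρ) φ •
        f (circleMap 0 ρ θ) (circleMap 0 ρ φ) := by
    simp only [intervalIntegral.integral_of_le Real.two_pi_pos.le]
    have hint : Integrable (Function.uncurry fun θ φ =>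
        deriv (circleMap 0 ρ) θ • deriv (circleMap 0 ρ) φ •
        f (circleMap 0 ρ θ) (circleMap 0 ρ φ))
        ((volume.restrict (Ioc (0:ℝ) (2*Real.pi))).prod
          (volume.restrict (Ioc (0:ℝ) (2*Real.pi)))) := by
      rw [MeasureTheory.Measure.prod_restrict]
      have hcpt : IsCompact (Icc (0:ℝ) (2*Real.pi) ×ˢ Icc (0:ℝ) (2*Real.pi)) :=
        isCompact_Icc.prod isCompact_Icc
      have h1 : IntegrableOn (Function.uncurry fun θ φ =>
          deriv (circleMap 0 ρ) θ • deriv (circleMap 0 ρ) φ •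
          f (circleMap 0 ρ θ) (circleMap 0 ρ φ))
          (Icc (0:ℝ) (2*Real.pi) ×ˢ Icc (0:ℝ) (2*Real.pi)) :=
        hjoint.continuousOn.integrableOn_compact hcpt
      exact h1.mono_set (prod_mono Ioc_subset_Icc_self Ioc_subset_Icc_self)
    exact MeasureTheory.integral_integral_swap hint
  calc (∮ η in C(0, ρ), ∮ s in C(0, ρ), f η s)
      = ∫ θ in (0:ℝ)..(2*Real.pi), ∫ φ in (0:ℝ)..(2*Real.pi),
        deriv (circleMap 0 ρ) θ • deriv (circleMap 0 ρ) φ •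
          f (circleMap 0 ρ θ) (circleMap 0 ρ φ) := by
        simp only [circleIntegral, intervalIntegral.integral_smul]
    _ = ∫ φ in (0:ℝ)..(2*Real.pi), ∫ θ in (0:ℝ)..(2*Real.pi),
        deriv (circleMap 0 ρ) θ • deriv (circleMap 0 ρ) φ •
          f (circleMap 0 ρ θ) (circleMap 0 ρ φ) := key
    _ = ∮ s in C(0, ρ), ∮ η in C(0, ρ), f η s := by
        simp only [circleIntegral, intervalIntegral.integral_smul]
        congr 1
        ext φ
        rw [← intervalIntegral.integral_smul]
        congr 1
        ext θ
        rw [smul_comm]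





open Complex

/-- Composition of integral kernels on the circle |η| = ρ with measure dζ/(2πi). -/
noncomputable def kComp (ρ : ℝ) (K L : ℂ → ℂ → ℂ) : ℂ → ℂ → ℂ :=
  fun η η'' => (2 * ↑Real.pi * I)⁻¹ * ∮ ζ in C(0, ρ), K η ζ * L ζ η''

/-- `kPow ρ K n` is the kernel of the (n+1)-st power of the integral operator with
kernel K. -/
noncomputable def kPow (ρ : ℝ) (K : ℂ → ℂ → ℂ) : ℕ → ℂ → ℂ → ℂ
  | 0 => K
  | n + 1 => kComp ρ K (kPow ρ K n)

/-- Trace of an integral operator on the circle |η| = ρ. -/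
noncomputable def kTrace (ρ : ℝ) (K : ℂ → ℂ → ℂ) : ℂ :=
  (2 * ↑Real.pi * I)⁻¹ * ∮ η in C(0, ρ), K η η

/-- Analytic extension (in the second variable) of the kernel of the n-th power. -/
noncomputable def ext2 (ρ : ℝ) (L g : ℂ → ℂ → ℂ) : ℕ → ℂ → ℂ → ℂ
  | 0 => g
  | n + 1 => fun η w => (2 * ↑Real.pi * I)⁻¹ * ∮ ζ in C(0, ρ), L η ζ * ext2 ρ L g n ζ w

/-- The cross-term kernels `L₂ L₁ⁿ`. -/
noncomputable def Rex (ρ : ℝ) (L₁ L₂ : ℂ → ℂ → ℂ) : ℕ → ℂ → ℂ → ℂ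
  | 0 => L₂
  | n + 1 => kComp ρ L₂ (kPow ρ L₁ n)

/-- Analytic extension (in the first variable) of the cross-term kernels. -/
noncomputable def Rt (ρ : ℝ) (L₁ G : ℂ → ℂ → ℂ) : ℕ → ℂ → ℂ → ℂ
  | 0 => G
  | n + 1 => fun w y => (2 * ↑Real.pi * I)⁻¹ * ∮ s in C(0, ρ), G w s * kPow ρ L₁ n s y

/-- Stability lemma for Fredholm determinants (Lemma 2): if L₁(η,η') extends
analytically in η' to the inside of the contour, and L₂(η,η') extends analytically in
both variables to the inside, then L₁L₂ = 0, L₂² = 0, tr L₂ = 0,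
tr (L₁+L₂)ⁿ = tr L₁ⁿ for all n ≥ 1, and hence det(I−(L₁+L₂)) = det(I−L₁). -/
theorem fredholm_stability (ρ : ℝ) (hρ : 0 < ρ) (L₁ L₂ : ℂ → ℂ → ℂ)
    (hc₁ : ContinuousOn (fun P : ℂ × ℂ => L₁ P.1 P.2)
      (Metric.sphere (0 : ℂ) ρ ×ˢ Metric.sphere (0 : ℂ) ρ))
    (hc₂ : ContinuousOn (fun P : ℂ × ℂ => L₂ P.1 P.2)
      (Metric.sphere (0 : ℂ) ρ ×ˢ Metric.sphere (0 : ℂ) ρ))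
    (h₁ : ∀ η ∈ Metric.sphere (0 : ℂ) ρ, ∃ g : ℂ → ℂ,
      DifferentiableOn ℂ g (Metric.closedBall 0 ρ) ∧
        ∀ η' ∈ Metric.sphere (0 : ℂ) ρ, g η' = L₁ η η')
    (h₂ : ∃ G : ℂ → ℂ → ℂ,
      (∀ η', DifferentiableOn ℂ (fun η => G η η') (Metric.closedBall 0 ρ)) ∧
      (∀ η, DifferentiableOn ℂ (G η) (Metric.closedBall 0 ρ)) ∧
      ∀ η ∈ Metric.sphere (0 : ℂ) ρ, ∀ η' ∈ Metric.sphere (0 : ℂ) ρ,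
        G η η' = L₂ η η') :
    (∀ η ∈ Metric.sphere (0 : ℂ) ρ, ∀ η'' ∈ Metric.sphere (0 : ℂ) ρ,
        kComp ρ L₁ L₂ η η'' = 0) ∧
    (∀ η ∈ Metric.sphere (0 : ℂ) ρ, ∀ η'' ∈ Metric.sphere (0 : ℂ) ρ,
        kComp ρ L₂ L₂ η η'' = 0) ∧
    kTrace ρ L₂ = 0 ∧
    (∀ n : ℕ, kTrace ρ (kPow ρ (fun a b => L₁ a b + L₂ a b) n)
        = kTrace ρ (kPow ρ L₁ n)) ∧
    Complex.exp (-(∑' n : ℕ,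
        kTrace ρ (kPow ρ (fun a b => L₁ a b + L₂ a b) n) / ((n : ℂ) + 1)))
      = Complex.exp (-(∑' n : ℕ, kTrace ρ (kPow ρ L₁ n) / ((n : ℂ) + 1))) := by
  obtain ⟨G, hG1, hG2, hGeq⟩ := h₂
  choose gfun hgd hgs using h₁
  classical
  set g' : ℂ → ℂ → ℂ :=
    fun η => if h : η ∈ Metric.sphere (0:ℂ) ρ then gfun η h else 0 with hg'def
  -- bounds on the kernels
  obtain ⟨M₁, hM₁0, hM₁⟩ : ∃ M₁ : ℝ, 0 ≤ M₁ ∧ ∀ η ∈ Metric.sphere (0:ℂ) ρ,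
      ∀ ζ ∈ Metric.sphere (0:ℂ) ρ, ‖L₁ η ζ‖ ≤ M₁ := by
    obtain ⟨C, hC⟩ := (((isCompact_sphere (0:ℂ) ρ).prod
      (isCompact_sphere (0:ℂ) ρ))).exists_bound_of_continuousOn hc₁
    exact ⟨max C 0, le_max_right _ _,
      fun η hη ζ hζ => le_trans (hC (η, ζ) ⟨hη, hζ⟩) (le_max_left _ _)⟩
  obtain ⟨M₂, hM₂0, hM₂⟩ : ∃ M₂ : ℝ, 0 ≤ M₂ ∧ ∀ η ∈ Metric.sphere (0:ℂ) ρ,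
      ∀ ζ ∈ Metric.sphere (0:ℂ) ρ, ‖L₂ η ζ‖ ≤ M₂ := by
    obtain ⟨C, hC⟩ := (((isCompact_sphere (0:ℂ) ρ).prod
      (isCompact_sphere (0:ℂ) ρ))).exists_bound_of_continuousOn hc₂
    exact ⟨max C 0, le_max_right _ _,
      fun η hη ζ hζ => le_trans (hC (η, ζ) ⟨hη, hζ⟩) (le_max_left _ _)⟩
  -- basic facts about g'
  have hg'd : ∀ η ∈ Metric.sphere (0:ℂ) ρ, DifferentiableOn ℂ (g' η) (closedBall 0 ρ) := by
    intro η hη; simp only [hg'def, dif_pos hη]; exact hgd η hη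
  have hg'eq : ∀ η ∈ Metric.sphere (0:ℂ) ρ, ∀ z ∈ Metric.sphere (0:ℂ) ρ, g' η z = L₁ η z := by
    intro η hη z hz; simp only [hg'def, dif_pos hη]; exact hgs η hη z hz
  have hg'bd : ∀ η ∈ Metric.sphere (0:ℂ) ρ, ∀ w ∈ closedBall (0:ℂ) ρ, ‖g' η w‖ ≤ M₁ :=
    fun η hη w hw => maxmod hρ (hg'd η hη)
      (fun z hz => by rw [hg'eq η hη z hz]; exact hM₁ η hη z hz) hw
  -- bounds on G
  have hGbd₁ : ∀ s ∈ Metric.sphere (0:ℂ) ρ, ∀ w ∈ closedBall (0:ℂ) ρ, ‖G w s‖ ≤ M₂ :=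
    fun s hs w hw => maxmod hρ (hG1 s)
      (fun z hz => by rw [hGeq z hz s hs]; exact hM₂ z hz s hs) hw
  have hGbd₂ : ∀ η ∈ Metric.sphere (0:ℂ) ρ, ∀ v ∈ closedBall (0:ℂ) ρ, ‖G η v‖ ≤ M₂ :=
    fun η hη v hv => maxmod hρ (hG2 η)
      (fun z hz => by rw [hGeq η hη z hz]; exact hM₂ η hη z hz) hv
  -- continuity of g' in the first variable
  have hg'contFst : ∀ w ∈ closedBall (0:ℂ) ρ,
      ContinuousOn (fun ζ => g' ζ w) (Metric.sphere (0:ℂ) ρ) := by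
    intro w hw
    by_cases hwB : w ∈ ball (0:ℂ) ρ
    · -- interior point: use the Cauchy transform representation
      have hwn : ‖w‖ < ρ := by simpa [mem_ball, dist_zero_right] using hwB
      have hker : ∀ ζ ∈ Metric.sphere (0:ℂ) ρ,
          g' ζ w = (2 * ↑Real.pi * I)⁻¹ • ∮ s in C(0, ρ), (s - w)⁻¹ • L₁ ζ s := by
        intro ζ hζ
        have hdc : DiffContOnCl ℂ (g' ζ) (ball 0 ρ) :=
          ⟨(hg'd ζ hζ).mono ball_subset_closedBall,
            (closure_ball (0:ℂ) hρ.ne') ▸ (hg'd ζ hζ).continuousOn⟩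
        have hcf := hdc.two_pi_i_inv_smul_circleIntegral_sub_inv_smul hwB
        rw [← hcf]
        congr 1
        exact circleIntegral.integral_congr hρ.le
          (fun s hs => by rw [hg'eq ζ hζ s hs])
      have hcont : ContinuousOn
          (fun ζ => ∮ s in C(0, ρ), (s - w)⁻¹ • L₁ ζ s) (Metric.sphere (0:ℂ) ρ) := by
        apply paramCont (X := ℂ) hρ (B := (ρ - ‖w‖)⁻¹ * M₁)
        · intro s hs
          exact ((sec₁ hc₁ hs)).const_smul ((s - w)⁻¹)
        · intro ζ hζ
          refine ContinuousOn.smul (f := fun s => (s - w)⁻¹) ?_ (sec₂ hc₁ hζ)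
          refine ((continuous_id.sub continuous_const).continuousOn).inv₀ ?_
          intro s hs
          have hsn : ‖s‖ = ρ := by simpa [mem_sphere_iff_norm] using hs
          show s - w ≠ 0
          intro hzero
          have hsw : s = w := sub_eq_zero.1 hzero
          rw [hsw] at hsn
          linarith
        · intro s hs ζ hζ
          rw [norm_smul]
          have h1 : ρ - ‖w‖ ≤ ‖s - w‖ := by
            have hsn : ‖s‖ = ρ := by simpa [mem_sphere_iff_norm] using hs
            have := norm_sub_norm_le s w
            linarith
          have h2 : (0:ℝ) < ρ - ‖w‖ := by linarith
          refine mul_le_mul ?_ (hM₁ ζ hζ s hs) (norm_nonneg _) (inv_nonneg.2 h2.le)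
          rw [norm_inv]
          exact inv_anti₀ h2 h1
      have hc2 := hcont.const_smul ((2 * ↑Real.pi * I)⁻¹)
      refine ContinuousOn.congr (f := fun ζ => (2 * ↑Real.pi * I)⁻¹ • ∮ s in C(0, ρ), (s - w)⁻¹ • L₁ ζ s) ?_ (fun ζ hζ => hker ζ hζ)
      exact hc2
    · -- boundary point
      have hwS : w ∈ Metric.sphere (0:ℂ) ρ := by
        simp only [mem_ball, mem_closedBall] at hwB hw
        exact mem_sphere.2 (le_antisymm hw (not_lt.1 hwB))
      exact (sec₁ hc₁ hwS).congr (fun ζ hζ => hg'eq ζ hζ w hwS)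
  -- the extension of kPow L₁ in the second variable
  have hext : ∀ n : ℕ,
      (∀ η ∈ Metric.sphere (0:ℂ) ρ, ∀ w ∈ Metric.sphere (0:ℂ) ρ,
        ext2 ρ L₁ g' n η w = kPow ρ L₁ n η w) ∧
      (∀ η ∈ Metric.sphere (0:ℂ) ρ, ContinuousOn (ext2 ρ L₁ g' n η) (closedBall 0 ρ)) ∧
      (∀ η ∈ Metric.sphere (0:ℂ) ρ, DifferentiableOn ℂ (ext2 ρ L₁ g' n η) (ball 0 ρ)) ∧
      (∀ η ∈ Metric.sphere (0:ℂ) ρ, ∀ w ∈ closedBall (0:ℂ) ρ,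
        ‖ext2 ρ L₁ g' n η w‖ ≤ M₁ * (ρ * M₁)^n) ∧
      (∀ w ∈ closedBall (0:ℂ) ρ,
        ContinuousOn (fun ζ => ext2 ρ L₁ g' n ζ w) (Metric.sphere (0:ℂ) ρ)) := by
    intro n
    induction n with
    | zero =>
      refine ⟨fun η hη w hw => hg'eq η hη w hw, fun η hη => (hg'd η hη).continuousOn,
        fun η hη => (hg'd η hη).mono ball_subset_closedBall,
        fun η hη w hw => by simpa [ext2] using hg'bd η hη w hw,
        fun w hw => hg'contFst w hw⟩
    | succ n ih =>
      obtain ⟨iha, ihc, ihd, ihb, ihf⟩ := ih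
      have hBnn : (0:ℝ) ≤ M₁ * (ρ * M₁)^n := by positivity
      have hbd : ∀ ζ ∈ Metric.sphere (0:ℂ) ρ, ∀ η ∈ Metric.sphere (0:ℂ) ρ,
          ∀ w ∈ closedBall (0:ℂ) ρ,
          ‖L₁ η ζ * ext2 ρ L₁ g' n ζ w‖ ≤ M₁ * (M₁ * (ρ * M₁)^n) := by
        intro ζ hζ η hη w hw
        rw [norm_mul]
        exact mul_le_mul (hM₁ η hη ζ hζ) (ihb ζ hζ w hw) (norm_nonneg _) hM₁0
      refine ⟨?_, ?_, ?_, ?_, ?_⟩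
      · -- agreement with kPow on the sphere
        intro η hη w hw
        show (2 * ↑Real.pi * I)⁻¹ * (∮ ζ in C(0, ρ), L₁ η ζ * ext2 ρ L₁ g' n ζ w)
          = kPow ρ L₁ (n+1) η w
        rw [kPow]
        show _ = (2 * ↑Real.pi * I)⁻¹ * ∮ ζ in C(0, ρ), L₁ η ζ * kPow ρ L₁ n ζ w
        congr 1
        exact circleIntegral.integral_congr hρ.le
          (fun ζ hζ => by rw [iha ζ hζ w hw])
      · -- continuity in w on the closed ball
        intro η hη
        show ContinuousOn
          (fun w => (2 * ↑Real.pi * I)⁻¹ * ∮ ζ in C(0, ρ), L₁ η ζ * ext2 ρ L₁ g' n ζ w)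
          (closedBall 0 ρ)
        refine continuousOn_const.mul ?_
        apply paramCont (X := ℂ) hρ (B := M₁ * (M₁ * (ρ * M₁)^n))
        · intro ζ hζ
          exact continuousOn_const.mul (ihc ζ hζ)
        · intro w hw
          exact (sec₂ hc₁ hη).mul (ihf w hw)
        · intro ζ hζ w hw
          exact hbd ζ hζ η hη w hw
      · -- differentiability in w on the open ball
        intro η hη
        show DifferentiableOn ℂ
          (fun w => (2 * ↑Real.pi * I)⁻¹ * ∮ ζ in C(0, ρ), L₁ η ζ * ext2 ρ L₁ g' n ζ w)
          (ball 0 ρ)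
        refine DifferentiableOn.const_mul ?_ _
        apply paramDiff' hρ (B := M₁ * (M₁ * (ρ * M₁)^n))
        · intro ζ hζ
          exact (ihd ζ hζ).const_mul _
        · intro w hw
          exact (sec₂ hc₁ hη).mul (ihf w (ball_subset_closedBall hw))
        · intro ζ hζ w hw
          exact hbd ζ hζ η hη w (ball_subset_closedBall hw)
      · -- bound
        intro η hη w hw
        show ‖(2 * ↑Real.pi * I)⁻¹ * ∮ ζ in C(0, ρ), L₁ η ζ * ext2 ρ L₁ g' n ζ w‖
          ≤ M₁ * (ρ * M₁)^(n+1)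
        rw [← smul_eq_mul]
        calc ‖(2 * ↑Real.pi * I)⁻¹ • ∮ ζ in C(0, ρ), L₁ η ζ * ext2 ρ L₁ g' n ζ w‖
            ≤ ρ * (M₁ * (M₁ * (ρ * M₁)^n)) :=
              circleIntegral.norm_two_pi_i_inv_smul_integral_le_of_norm_le_const hρ.le
                (fun ζ hζ => hbd ζ hζ η hη w hw)
          _ = M₁ * (ρ * M₁)^(n+1) := by ring
      · -- continuity in the first variable
        intro w hw
        show ContinuousOn
          (fun ζ => (2 * ↑Real.pi * I)⁻¹ * ∮ s in C(0, ρ), L₁ ζ s * ext2 ρ L₁ g' n s w)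
          (Metric.sphere (0:ℂ) ρ)
        refine continuousOn_const.mul ?_
        apply paramCont (X := ℂ) hρ (B := M₁ * (M₁ * (ρ * M₁)^n))
        · intro s hs
          exact (sec₁ hc₁ hs).mul continuousOn_const
        · intro ζ hζ
          exact (sec₂ hc₁ hζ).mul (ihf w hw)
        · intro s hs ζ hζ
          exact hbd s hs ζ hζ w hw
  have hPeq : ∀ n, ∀ η ∈ Metric.sphere (0:ℂ) ρ, ∀ w ∈ Metric.sphere (0:ℂ) ρ,
      ext2 ρ L₁ g' n η w = kPow ρ L₁ n η w := fun n => (hext n).1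
  have hPbd : ∀ n, ∀ s ∈ Metric.sphere (0:ℂ) ρ, ∀ y ∈ Metric.sphere (0:ℂ) ρ,
      ‖kPow ρ L₁ n s y‖ ≤ M₁ * (ρ * M₁)^n := by
    intro n s hs y hy
    rw [← hPeq n s hs y hy]
    exact (hext n).2.2.2.1 s hs y (sphere_subset_closedBall hy)
  have hPcont₁ : ∀ n, ∀ y ∈ Metric.sphere (0:ℂ) ρ,
      ContinuousOn (fun s => kPow ρ L₁ n s y) (Metric.sphere (0:ℂ) ρ) := by
    intro n y hy
    exact ((hext n).2.2.2.2 y (sphere_subset_closedBall hy)).congr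
      (fun s hs => (hPeq n s hs y hy).symm)
  have hPcont₂ : ∀ n, ∀ s ∈ Metric.sphere (0:ℂ) ρ,
      ContinuousOn (fun y => kPow ρ L₁ n s y) (Metric.sphere (0:ℂ) ρ) := by
    intro n s hs
    exact (((hext n).2.1 s hs).mono sphere_subset_closedBall).congr
      (fun y hy => (hPeq n s hs y hy).symm)
  -- joint continuity of kPow L₁ n
  have hPjoint : ∀ n, ContinuousOn (fun p : ℂ × ℂ => kPow ρ L₁ n p.1 p.2)
      (Metric.sphere (0:ℂ) ρ ×ˢ Metric.sphere (0:ℂ) ρ) := by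
    intro n
    induction n with
    | zero => exact hc₁
    | succ n ih =>
      have key : ContinuousOn
          (fun p : ℂ × ℂ => ∮ ζ in C(0, ρ), L₁ p.1 ζ * kPow ρ L₁ n ζ p.2)
          (Metric.sphere (0:ℂ) ρ ×ˢ Metric.sphere (0:ℂ) ρ) := by
        apply paramCont (X := ℂ × ℂ) hρ (B := M₁ * (M₁ * (ρ * M₁)^n))
        · intro ζ hζ
          refine ContinuousOn.mul ?_ ?_
          · exact hc₁.comp (continuous_fst.prodMk continuous_const).continuousOn
              (fun p hp => ⟨hp.1, hζ⟩)
          · exact (hPcont₂ n ζ hζ).comp continuous_snd.continuousOn (fun p hp => hp.2)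
        · intro p hp
          exact (sec₂ hc₁ hp.1).mul (hPcont₁ n p.2 hp.2)
        · intro ζ hζ p hp
          rw [norm_mul]
          exact mul_le_mul (hM₁ p.1 hp.1 ζ hζ) (hPbd n ζ hζ p.2 hp.2) (norm_nonneg _) hM₁0
      have : (fun p : ℂ × ℂ => kPow ρ L₁ (n+1) p.1 p.2)
          = fun p : ℂ × ℂ => (2 * ↑Real.pi * I)⁻¹ *
            ∮ ζ in C(0, ρ), L₁ p.1 ζ * kPow ρ L₁ n ζ p.2 := by
        funext p
        rw [kPow]
        rfl
      rw [this]
      exact continuousOn_const.mul key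
  -- facts about the extension Rt of the cross terms
  have hRt : ∀ n, ∀ y ∈ Metric.sphere (0:ℂ) ρ,
      DifferentiableOn ℂ (fun w => Rt ρ L₁ G n w y) (ball 0 ρ) ∧
      ContinuousOn (fun w => Rt ρ L₁ G n w y) (closedBall 0 ρ) ∧
      (∀ w ∈ Metric.sphere (0:ℂ) ρ, Rt ρ L₁ G n w y = Rex ρ L₁ L₂ n w y) := by
    intro n y hy
    cases n with
    | zero =>
      exact ⟨(hG1 y).mono ball_subset_closedBall, (hG1 y).continuousOn,
        fun w hw => hGeq w hw y hy⟩
    | succ n =>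
      have hbd : ∀ s ∈ Metric.sphere (0:ℂ) ρ, ∀ w ∈ closedBall (0:ℂ) ρ,
          ‖G w s * kPow ρ L₁ n s y‖ ≤ M₂ * (M₁ * (ρ * M₁)^n) := by
        intro s hs w hw
        rw [norm_mul]
        exact mul_le_mul (hGbd₁ s hs w hw) (hPbd n s hs y hy) (norm_nonneg _) hM₂0
      refine ⟨?_, ?_, ?_⟩
      · show DifferentiableOn ℂ
          (fun w => (2 * ↑Real.pi * I)⁻¹ * ∮ s in C(0, ρ), G w s * kPow ρ L₁ n s y)
          (ball 0 ρ)
        refine DifferentiableOn.const_mul ?_ _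
        apply paramDiff' hρ (B := M₂ * (M₁ * (ρ * M₁)^n))
        · intro s hs
          exact ((hG1 s).mono ball_subset_closedBall).mul_const _
        · intro w hw
          exact ((hG2 w).continuousOn.mono sphere_subset_closedBall).mul
            (hPcont₁ n y hy)
        · intro s hs w hw
          exact hbd s hs w (ball_subset_closedBall hw)
      · show ContinuousOn
          (fun w => (2 * ↑Real.pi * I)⁻¹ * ∮ s in C(0, ρ), G w s * kPow ρ L₁ n s y)
          (closedBall 0 ρ)
        refine continuousOn_const.mul ?_
        apply paramCont (X := ℂ) hρ (B := M₂ * (M₁ * (ρ * M₁)^n))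
        · intro s hs
          exact ((hG1 s).continuousOn).mul continuousOn_const
        · intro w hw
          exact ((hG2 w).continuousOn.mono sphere_subset_closedBall).mul
            (hPcont₁ n y hy)
        · intro s hs w hw
          exact hbd s hs w hw
      · intro w hw
        show (2 * ↑Real.pi * I)⁻¹ * (∮ s in C(0, ρ), G w s * kPow ρ L₁ n s y)
          = Rex ρ L₁ L₂ (n+1) w y
        rw [Rex]
        show _ = (2 * ↑Real.pi * I)⁻¹ * ∮ s in C(0, ρ), L₂ w s * kPow ρ L₁ n s y
        congr 1
        exact circleIntegral.integral_congr hρ.le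
          (fun s hs => by rw [hGeq w hw s hs])
  have hRexCont : ∀ n, ∀ y ∈ Metric.sphere (0:ℂ) ρ,
      ContinuousOn (fun ζ => Rex ρ L₁ L₂ n ζ y) (Metric.sphere (0:ℂ) ρ) :=
    fun n y hy => (((hRt n y hy).2.1).mono sphere_subset_closedBall).congr
      (fun ζ hζ => ((hRt n y hy).2.2 ζ hζ).symm)
  -- the key kernel identity
  have hker : ∀ n, ∀ η ∈ Metric.sphere (0:ℂ) ρ, ∀ y ∈ Metric.sphere (0:ℂ) ρ,
      kPow ρ (fun a b => L₁ a b + L₂ a b) n η y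
        = kPow ρ L₁ n η y + Rex ρ L₁ L₂ n η y := by
    intro n
    induction n with
    | zero => intro η hη y hy; rfl
    | succ n ih =>
      intro η hη y hy
      have intA : CircleIntegrable (fun ζ => L₁ η ζ * kPow ρ L₁ n ζ y) 0 ρ :=
        ((sec₂ hc₁ hη).mul (hPcont₁ n y hy)).circleIntegrable hρ.le
      have intB : CircleIntegrable (fun ζ => L₁ η ζ * Rex ρ L₁ L₂ n ζ y) 0 ρ :=
        ((sec₂ hc₁ hη).mul (hRexCont n y hy)).circleIntegrable hρ.le
      have intC : CircleIntegrable (fun ζ => L₂ η ζ * kPow ρ L₁ n ζ y) 0 ρ :=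
        ((sec₂ hc₂ hη).mul (hPcont₁ n y hy)).circleIntegrable hρ.le
      have intD : CircleIntegrable (fun ζ => L₂ η ζ * Rex ρ L₁ L₂ n ζ y) 0 ρ :=
        ((sec₂ hc₂ hη).mul (hRexCont n y hy)).circleIntegrable hρ.le
      have hB0 : (∮ ζ in C(0, ρ), L₁ η ζ * Rex ρ L₁ L₂ n ζ y) = 0 := by
        apply czero hρ (f := fun w => g' η w * Rt ρ L₁ G n w y)
        · exact ((hg'd η hη).mono ball_subset_closedBall).mul (hRt n y hy).1
        · exact (hg'd η hη).continuousOn.mul (hRt n y hy).2.1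
        · intro z hz
          rw [hg'eq η hη z hz, (hRt n y hy).2.2 z hz]
      have hD0 : (∮ ζ in C(0, ρ), L₂ η ζ * Rex ρ L₁ L₂ n ζ y) = 0 := by
        apply czero hρ (f := fun w => G η w * Rt ρ L₁ G n w y)
        · exact ((hG2 η).mono ball_subset_closedBall).mul (hRt n y hy).1
        · exact (hG2 η).continuousOn.mul (hRt n y hy).2.1
        · intro z hz
          rw [hGeq η hη z hz, (hRt n y hy).2.2 z hz]
      have hsplit : (∮ ζ in C(0, ρ),
            (fun a b => L₁ a b + L₂ a b) η ζ * kPow ρ (fun a b => L₁ a b + L₂ a b) n ζ y)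
          = (∮ ζ in C(0, ρ), L₁ η ζ * kPow ρ L₁ n ζ y)
            + ((∮ ζ in C(0, ρ), L₁ η ζ * Rex ρ L₁ L₂ n ζ y)
            + ((∮ ζ in C(0, ρ), L₂ η ζ * kPow ρ L₁ n ζ y)
            + (∮ ζ in C(0, ρ), L₂ η ζ * Rex ρ L₁ L₂ n ζ y))) := by
        refine Eq.trans (circleIntegral.integral_congr hρ.le (g := fun ζ =>
          L₁ η ζ * kPow ρ L₁ n ζ y + (L₁ η ζ * Rex ρ L₁ L₂ n ζ y
            + (L₂ η ζ * kPow ρ L₁ n ζ y + L₂ η ζ * Rex ρ L₁ L₂ n ζ y)))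
          (fun ζ hζ => by rw [ih ζ hζ y hy]; ring)) ?_
        have intCD : CircleIntegrable (fun ζ => L₂ η ζ * kPow ρ L₁ n ζ y
            + L₂ η ζ * Rex ρ L₁ L₂ n ζ y) 0 ρ := intC.add intD
        have intBCD : CircleIntegrable (fun ζ => L₁ η ζ * Rex ρ L₁ L₂ n ζ y
            + (L₂ η ζ * kPow ρ L₁ n ζ y + L₂ η ζ * Rex ρ L₁ L₂ n ζ y)) 0 ρ :=
          intB.add intCD
        rw [cint_add intA intBCD, cint_add intB intCD, cint_add intC intD]
      rw [kPow]
      show (2 * ↑Real.pi * I)⁻¹ * (∮ ζ in C(0, ρ),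
          (fun a b => L₁ a b + L₂ a b) η ζ * kPow ρ (fun a b => L₁ a b + L₂ a b) n ζ y)
        = _
      rw [hsplit, hB0, hD0, kPow, Rex]
      show (2 * ↑Real.pi * I)⁻¹ * ((∮ ζ in C(0, ρ), L₁ η ζ * kPow ρ L₁ n ζ y)
          + (0 + ((∮ ζ in C(0, ρ), L₂ η ζ * kPow ρ L₁ n ζ y) + 0)))
        = (2 * ↑Real.pi * I)⁻¹ * (∮ ζ in C(0, ρ), L₁ η ζ * kPow ρ L₁ n ζ y)
          + (2 * ↑Real.pi * I)⁻¹ * (∮ ζ in C(0, ρ), L₂ η ζ * kPow ρ L₁ n ζ y)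
      ring
  -- vanishing of the trace of L₂
  have htrL₂ : (∮ η in C(0, ρ), L₂ η η) = 0 := by
    -- Cauchy representation of G in the second variable
    have hGrep : ∀ η ∈ Metric.sphere (0:ℂ) ρ, ∀ v ∈ ball (0:ℂ) ρ,
        G η v = (2 * ↑Real.pi * I)⁻¹ • ∮ s in C(0, ρ), (s - v)⁻¹ • G η s := by
      intro η hη v hv
      have hdc : DiffContOnCl ℂ (G η) (ball 0 ρ) :=
        ⟨(hG2 η).mono ball_subset_closedBall,
          (closure_ball (0:ℂ) hρ.ne') ▸ (hG2 η).continuousOn⟩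
      exact (hdc.two_pi_i_inv_smul_circleIntegral_sub_inv_smul hv).symm
    -- Lipschitz bound for G in the second variable on shrunk balls
    have hGlip : ∀ r : ℝ, 0 ≤ r → r < ρ → ∀ η ∈ Metric.sphere (0:ℂ) ρ,
        ∀ v ∈ closedBall (0:ℂ) r, ∀ v' ∈ closedBall (0:ℂ) r,
        ‖G η v - G η v'‖ ≤ ρ * (M₂ / ((ρ - r) * (ρ - r)) * ‖v - v'‖) := by
      intro r hr0 hr η hη v hv v' hv'
      have hvn : ‖v‖ ≤ r := by simpa [mem_closedBall, dist_zero_right] using hv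
      have hv'n : ‖v'‖ ≤ r := by simpa [mem_closedBall, dist_zero_right] using hv'
      have hvρ : v ∈ ball (0:ℂ) ρ := by
        simp only [mem_ball, dist_zero_right]; linarith
      have hv'ρ : v' ∈ ball (0:ℂ) ρ := by
        simp only [mem_ball, dist_zero_right]; linarith
      have hne : ∀ u : ℂ, ‖u‖ ≤ r → ∀ s ∈ Metric.sphere (0:ℂ) ρ, ρ - r ≤ ‖s - u‖ := by
        intro u hu s hs
        have hsn : ‖s‖ = ρ := by simpa [mem_sphere_iff_norm] using hs
        have := norm_sub_norm_le s u
        linarith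
      have hrρ0 : (0:ℝ) < ρ - r := by linarith
      have int1 : CircleIntegrable (fun s => (s - v)⁻¹ • G η s) 0 ρ := by
        refine ContinuousOn.circleIntegrable hρ.le ?_
        refine ContinuousOn.smul (f := fun s => (s - v)⁻¹) ?_ ((hG2 η).continuousOn.mono sphere_subset_closedBall)
        refine ((continuous_id.sub continuous_const).continuousOn).inv₀ ?_
        intro s hs
        show s - v ≠ 0
        intro h0
        have := hne v hvn s hs
        rw [h0] at this
        simp at this
        linarith
      have int2 : CircleIntegrable (fun s => (s - v')⁻¹ • G η s) 0 ρ := by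
        refine ContinuousOn.circleIntegrable hρ.le ?_
        refine ContinuousOn.smul (f := fun s => (s - v')⁻¹) ?_ ((hG2 η).continuousOn.mono sphere_subset_closedBall)
        refine ((continuous_id.sub continuous_const).continuousOn).inv₀ ?_
        intro s hs
        show s - v' ≠ 0
        intro h0
        have := hne v' hv'n s hs
        rw [h0] at this
        simp at this
        linarith
      rw [hGrep η hη v hvρ, hGrep η hη v' hv'ρ, ← smul_sub,
        ← circleIntegral.integral_sub int1 int2]
      refine circleIntegral.norm_two_pi_i_inv_smul_integral_le_of_norm_le_const hρ.le ?_
      intro s hs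
      have hsv := hne v hvn s hs
      have hsv' := hne v' hv'n s hs
      have hsvne : s - v ≠ 0 := by
        intro h0; rw [h0] at hsv; simp at hsv; linarith
      have hsv'ne : s - v' ≠ 0 := by
        intro h0; rw [h0] at hsv'; simp at hsv'; linarith
      rw [← sub_smul, norm_smul]
      have hkey : (s - v)⁻¹ - (s - v')⁻¹ = (v - v') / ((s - v) * (s - v')) := by
        rw [inv_sub_inv hsvne hsv'ne]
        congr 1
        ring
      rw [hkey]
      have h1 : ‖(v - v') / ((s - v) * (s - v'))‖
          ≤ ‖v - v'‖ / ((ρ - r) * (ρ - r)) := by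
        rw [norm_div, norm_mul]
        apply div_le_div₀ (by positivity) le_rfl (by positivity)
        exact mul_le_mul hsv hsv' hrρ0.le (norm_nonneg _)
      have h2 : ‖G η s‖ ≤ M₂ := hGbd₂ η hη s (sphere_subset_closedBall hs)
      calc ‖(v - v') / ((s - v) * (s - v'))‖ * ‖G η s‖
          ≤ (‖v - v'‖ / ((ρ - r) * (ρ - r))) * M₂ :=
            mul_le_mul h1 h2 (norm_nonneg _) (by positivity)
        _ = M₂ / ((ρ - r) * (ρ - r)) * ‖v - v'‖ := by ring
    -- continuity of the twisted diagonal on the closed ball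
    have hDcont : ∀ c : ℝ, 0 < c → c < 1 →
        ContinuousOn (fun w => G w ((c:ℂ) * w)) (closedBall 0 ρ) := by
      intro c hc0 hc1
      intro w₀ hw₀
      have hmem : ∀ w ∈ closedBall (0:ℂ) ρ, (c:ℂ) * w ∈ closedBall (0:ℂ) (c * ρ) := by
        intro w hw
        have : ‖w‖ ≤ ρ := by simpa [mem_closedBall, dist_zero_right] using hw
        simp only [mem_closedBall, dist_zero_right, norm_mul, Complex.norm_real,
          Real.norm_eq_abs, abs_of_pos hc0]
        exact mul_le_mul_of_nonneg_left this hc0.le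
      have hcρ : c * ρ < ρ := by nlinarith
      have hcρ0 : (0:ℝ) ≤ c * ρ := by positivity
      set K : ℝ := ρ * (M₂ / ((ρ - c * ρ) * (ρ - c * ρ))) with hK
      have hbound : ∀ w ∈ closedBall (0:ℂ) ρ,
          ‖G w ((c:ℂ) * w) - G w ((c:ℂ) * w₀)‖ ≤ K * (c * ‖w - w₀‖) := by
        intro w hw
        have hdf : DifferentiableOn ℂ (fun z => G z ((c:ℂ) * w) - G z ((c:ℂ) * w₀))
            (closedBall 0 ρ) := (hG1 _).sub (hG1 _)
        refine maxmod hρ hdf (C := K * (c * ‖w - w₀‖)) ?_ hw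
        intro z hz
        have hlip := hGlip (c * ρ) hcρ0 hcρ z hz ((c:ℂ) * w) (hmem w hw)
          ((c:ℂ) * w₀) (hmem w₀ hw₀)
        have hnorm : ‖(c:ℂ) * w - (c:ℂ) * w₀‖ = c * ‖w - w₀‖ := by
          rw [← mul_sub, norm_mul, Complex.norm_real, Real.norm_eq_abs, abs_of_pos hc0]
        rw [hnorm] at hlip
        calc ‖G z ((c:ℂ) * w) - G z ((c:ℂ) * w₀)‖
            ≤ ρ * (M₂ / ((ρ - c * ρ) * (ρ - c * ρ)) * (c * ‖w - w₀‖)) := hlip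
          _ = K * (c * ‖w - w₀‖) := by rw [hK]; ring
      have h2 : ContinuousWithinAt (fun w => G w ((c:ℂ) * w₀)) (closedBall 0 ρ) w₀ :=
        (hG1 _).continuousOn w₀ hw₀
      have h1 : Tendsto (fun w => G w ((c:ℂ) * w) - G w ((c:ℂ) * w₀))
          (𝓝[closedBall (0:ℂ) ρ] w₀) (𝓝 0) := by
        refine squeeze_zero_norm' (a := fun w : ℂ => K * (c * ‖w - w₀‖)) ?_ ?_
        · filter_upwards [self_mem_nhdsWithin] with w hw using hbound w hw
        · have hg : Tendsto (fun w : ℂ => K * (c * ‖w - w₀‖)) (𝓝 w₀)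
              (𝓝 (K * (c * ‖w₀ - w₀‖))) := by
            refine Tendsto.const_mul _ (Tendsto.const_mul _ ?_)
            exact ((continuous_id.sub continuous_const).norm).tendsto w₀
          have : K * (c * ‖w₀ - w₀‖) = 0 := by simp
          rw [this] at hg
          exact hg.mono_left nhdsWithin_le_nhds
      have hsum := h1.add h2
      rw [zero_add] at hsum
      have heq : (fun w => (G w ((c:ℂ) * w) - G w ((c:ℂ) * w₀)) + G w ((c:ℂ) * w₀))
          = fun w => G w ((c:ℂ) * w) := by
        funext w; ring
      rw [heq] at hsum
      exact hsum
    -- differentiability of the twisted diagonal on the open ball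
    have hDdiff : ∀ c : ℝ, 0 < c → c < 1 →
        DifferentiableOn ℂ (fun w => G w ((c:ℂ) * w)) (ball 0 ρ) := by
      intro c hc0 hc1
      have hmemcb : ∀ w ∈ closedBall (0:ℂ) ρ, (c:ℂ) * w ∈ closedBall (0:ℂ) ρ := by
        intro w hw
        have : ‖w‖ ≤ ρ := by simpa [mem_closedBall, dist_zero_right] using hw
        simp only [mem_closedBall, dist_zero_right, norm_mul, Complex.norm_real,
          Real.norm_eq_abs, abs_of_pos hc0]
        nlinarith
      have hFeq : ∀ w ∈ ball (0:ℂ) ρ,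
          (2 * ↑Real.pi * I)⁻¹ • (∮ η in C(0, ρ), (η - w)⁻¹ * G η ((c:ℂ) * w))
            = G w ((c:ℂ) * w) := by
        intro w hw
        have hdc : DiffContOnCl ℂ (fun z => G z ((c:ℂ) * w)) (ball 0 ρ) :=
          ⟨(hG1 _).mono ball_subset_closedBall,
            (closure_ball (0:ℂ) hρ.ne') ▸ (hG1 _).continuousOn⟩
        have := hdc.two_pi_i_inv_smul_circleIntegral_sub_inv_smul hw
        simpa [smul_eq_mul] using this
      intro w₀ hw₀
      have hw₀n : ‖w₀‖ < ρ := by simpa [mem_ball, dist_zero_right] using hw₀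
      set r : ℝ := (‖w₀‖ + ρ) / 2 with hrdef
      have hr : 0 < r := by positivity
      have hrρ : r < ρ := by rw [hrdef]; linarith
      have hw₀r : w₀ ∈ ball (0:ℂ) r := by
        simp only [mem_ball, dist_zero_right]; rw [hrdef]; linarith
      have hmemball : ∀ w ∈ ball (0:ℂ) r, (c:ℂ) * w ∈ closedBall (0:ℂ) ρ := by
        intro w hw
        exact hmemcb w (ball_subset_closedBall (ball_subset_ball hrρ.le hw))
      have hneball : ∀ η ∈ Metric.sphere (0:ℂ) ρ, ∀ w ∈ ball (0:ℂ) r, ρ - r ≤ ‖η - w‖ := by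
        intro η hη w hw
        have hηn : ‖η‖ = ρ := by simpa [mem_sphere_iff_norm] using hη
        have hwn : ‖w‖ < r := by simpa [mem_ball, dist_zero_right] using hw
        have := norm_sub_norm_le η w
        linarith
      have hF : DifferentiableOn ℂ
          (fun w => ∮ η in C(0, ρ), (η - w)⁻¹ * G η ((c:ℂ) * w)) (ball 0 r) := by
        apply paramDiff hρ hr hrρ (B := (ρ - r)⁻¹ * M₂)
        · intro η hη
          refine DifferentiableOn.mul ?_ ?_
          · refine DifferentiableOn.inv ?_ ?_
            · exact (differentiable_const η).differentiableOn.sub differentiable_id.differentiableOn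
            · intro w hw
              intro h0
              have := hneball η hη w hw
              rw [h0] at this
              simp at this
              linarith
          · refine DifferentiableOn.comp (hG2 η)
              ((differentiable_const ((c:ℂ))).mul differentiable_id).differentiableOn ?_
            intro w hw
            exact hmemball w hw
        · intro w hw
          refine ContinuousOn.mul ?_ ?_
          · refine ((continuous_id.sub continuous_const).continuousOn).inv₀ ?_
            intro η hη
            show η - w ≠ 0
            intro h0
            have := hneball η hη w hw
            rw [h0] at this
            simp at this
            linarith
          · exact (hG1 ((c:ℂ) * w)).continuousOn.mono sphere_subset_closedBall
        · intro η hη w hw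
          rw [norm_mul]
          have h1 : ‖(η - w)⁻¹‖ ≤ (ρ - r)⁻¹ := by
            rw [norm_inv]
            exact inv_anti₀ (by linarith) (hneball η hη w hw)
          exact mul_le_mul h1 (hGbd₂ η hη _ (hmemball w hw)) (norm_nonneg _)
            (inv_nonneg.2 (by linarith))
      have hFc : DifferentiableAt ℂ
          (fun w => (2 * ↑Real.pi * I)⁻¹ • ∮ η in C(0, ρ), (η - w)⁻¹ * G η ((c:ℂ) * w)) w₀ :=
        by
          simp only [smul_eq_mul]
          have h1 := hF w₀ hw₀r
          have h2 := h1.differentiableAt (Metric.isOpen_ball.mem_nhds hw₀r)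
          have h3 := h2.const_mul ((2 * ↑Real.pi * I)⁻¹)
          exact h3
      have heq : (fun w => G w ((c:ℂ) * w)) =ᶠ[nhds w₀]
          (fun w => (2 * ↑Real.pi * I)⁻¹ • ∮ η in C(0, ρ), (η - w)⁻¹ * G η ((c:ℂ) * w)) := by
        filter_upwards [Metric.isOpen_ball.mem_nhds hw₀r] with w hw
        exact (hFeq w (ball_subset_ball hrρ.le hw)).symm
      exact (hFc.congr_of_eventuallyEq heq.symm.symm).differentiableWithinAt
    -- each twisted integral vanishes
    have hzero : ∀ c : ℝ, 0 < c → c < 1 →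
        (∮ η in C(0, ρ), G η ((c:ℂ) * η)) = 0 :=
      fun c h0 h1 => czero hρ (hDdiff c h0 h1) (hDcont c h0 h1) (fun z _ => rfl)
    -- the limit c → 1
    set cs : ℕ → ℝ := fun n => 1 - 1 / (n + 2) with hcs
    have hcs0 : ∀ n, 0 < cs n := by
      intro n
      have h1 : (1:ℝ) / (n + 2) ≤ 1 / 2 := by
        apply div_le_div_of_nonneg_left one_pos.le two_pos
        push_cast; linarith [Nat.cast_nonneg (α := ℝ) n]
      have h2 : (0:ℝ) < 1 / ((n:ℝ) + 2) := by positivity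
      simp only [hcs]; linarith
    have hcs1 : ∀ n, cs n < 1 := by
      intro n
      have h2 : (0:ℝ) < 1 / ((n:ℝ) + 2) := by positivity
      simp only [hcs]; linarith
    have hcsl : Tendsto cs atTop (𝓝 1) := by
      have h0 : Tendsto (fun n : ℕ => 1 / ((n:ℝ) + 2)) atTop (𝓝 0) := by
        have ht : Tendsto (fun n : ℕ => ((n:ℝ) + 2)) atTop atTop :=
          tendsto_atTop_add_const_right _ 2 tendsto_natCast_atTop_atTop
        simpa [one_div, Pi.inv_def] using ht.inv_tendsto_atTop
      have := tendsto_const_nhds.sub h0 (f := fun _ : ℕ => (1:ℝ))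
      simpa [hcs] using this
    have hmemcb : ∀ n, ∀ θ : ℝ, ((cs n : ℝ):ℂ) * circleMap 0 ρ θ ∈ closedBall (0:ℂ) ρ := by
      intro n θ
      simp only [mem_closedBall, dist_zero_right, norm_mul, Complex.norm_real,
        Real.norm_eq_abs, abs_of_pos (hcs0 n)]
      have : ‖circleMap 0 ρ θ‖ = ρ := by
        simpa [mem_sphere_iff_norm] using circleMap_mem_sphere 0 hρ.le θ
      rw [this]
      nlinarith [hcs0 n, hcs1 n]
    have hlim : Tendsto (fun n => ∮ η in C(0, ρ), G η ((cs n : ℂ) * η)) atTop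
        (𝓝 (∮ η in C(0, ρ), L₂ η η)) := by
      simp only [circleIntegral]
      apply intervalIntegral.tendsto_integral_filter_of_dominated_convergence
        (bound := fun _ => ρ * M₂)
      · filter_upwards with n
        have hc : Continuous fun θ : ℝ => deriv (circleMap 0 ρ) θ •
            G (circleMap 0 ρ θ) ((cs n : ℂ) * circleMap 0 ρ θ) := by
          simp only [deriv_circleMap]
          refine ((continuous_circleMap 0 ρ).mul continuous_const).smul ?_
          have hcd := hDcont (cs n) (hcs0 n) (hcs1 n)
          rw [← continuousOn_univ]
          exact hcd.comp (continuous_circleMap 0 ρ).continuousOn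
            (fun θ _ => sphere_subset_closedBall (circleMap_mem_sphere 0 hρ.le θ))
        exact hc.aestronglyMeasurable
      · filter_upwards with n
        filter_upwards with θ _
        rw [norm_smul]
        have h1 : ‖deriv (circleMap 0 ρ) θ‖ = ρ := by
          simp [deriv_circleMap, abs_of_pos hρ]
        rw [h1]
        refine mul_le_mul_of_nonneg_left ?_ hρ.le
        exact hGbd₂ _ (circleMap_mem_sphere 0 hρ.le θ) _ (hmemcb n θ)
      · exact intervalIntegrable_const
      · filter_upwards with θ _
        have hcw : ContinuousWithinAt (G (circleMap 0 ρ θ)) (closedBall 0 ρ)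
            (circleMap 0 ρ θ) :=
          (hG2 _).continuousOn _ (sphere_subset_closedBall (circleMap_mem_sphere 0 hρ.le θ))
        have hseq : Tendsto (fun n => ((cs n : ℝ):ℂ) * circleMap 0 ρ θ) atTop
            (𝓝[closedBall (0:ℂ) ρ] (circleMap 0 ρ θ)) := by
          rw [tendsto_nhdsWithin_iff]
          constructor
          · have h1 : Tendsto (fun n => ((cs n : ℝ):ℂ)) atTop (𝓝 1) :=
              (Complex.continuous_ofReal.tendsto 1).comp hcsl
            have := h1.mul_const (circleMap 0 ρ θ)
            simpa using this
          · filter_upwards with n using hmemcb n θ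
        have := (hcw.tendsto.comp hseq).const_smul (deriv (circleMap 0 ρ) θ)
        have hval : G (circleMap 0 ρ θ) (circleMap 0 ρ θ)
            = L₂ (circleMap 0 ρ θ) (circleMap 0 ρ θ) :=
          hGeq _ (circleMap_mem_sphere 0 hρ.le θ) _ (circleMap_mem_sphere 0 hρ.le θ)
        rw [hval] at this
        exact this
    have hconst : (fun n => ∮ η in C(0, ρ), G η ((cs n : ℂ) * η)) = fun _ => (0:ℂ) := by
      funext n
      exact hzero (cs n) (hcs0 n) (hcs1 n)
    rw [hconst] at hlim
    exact tendsto_nhds_unique hlim tendsto_const_nhds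
  -- vanishing of the traces of the cross terms
  have htrRex : ∀ n, (∮ η in C(0, ρ), Rex ρ L₁ L₂ n η η) = 0 := by
    intro n
    cases n with
    | zero =>
      simp only [Rex]
      exact htrL₂
    | succ n =>
      have hjoint : ContinuousOn
          (fun p : ℂ × ℂ => L₂ p.1 p.2 * kPow ρ L₁ n p.2 p.1)
          (Metric.sphere (0:ℂ) ρ ×ˢ Metric.sphere (0:ℂ) ρ) :=
        hc₂.mul ((hPjoint n).comp (continuous_snd.prodMk continuous_fst).continuousOn
          (fun p hp => ⟨hp.2, hp.1⟩))
      have hzero0 : (∮ s in C(0, ρ), (0:ℂ)) = 0 := by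
        simp [circleIntegral]
      calc (∮ η in C(0, ρ), Rex ρ L₁ L₂ (n+1) η η)
          = ∮ η in C(0, ρ), (2 * ↑Real.pi * I)⁻¹ *
              ∮ s in C(0, ρ), L₂ η s * kPow ρ L₁ n s η := by
            refine circleIntegral.integral_congr hρ.le ?_
            intro η hη
            rw [Rex]
            rfl
        _ = (2 * ↑Real.pi * I)⁻¹ *
              ∮ η in C(0, ρ), ∮ s in C(0, ρ), L₂ η s * kPow ρ L₁ n s η :=
            circleIntegral.integral_const_mul _ _ _ _
        _ = (2 * ↑Real.pi * I)⁻¹ *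
              ∮ s in C(0, ρ), ∮ η in C(0, ρ), L₂ η s * kPow ρ L₁ n s η := by
            rw [circleIntegral_swap hρ hjoint]
        _ = (2 * ↑Real.pi * I)⁻¹ * ∮ s in C(0, ρ), (0:ℂ) := by
            congr 1
            refine circleIntegral.integral_congr hρ.le ?_
            intro s hs
            apply czero hρ (f := fun w => G w s * ext2 ρ L₁ g' n s w)
            · exact ((hG1 s).mono ball_subset_closedBall).mul ((hext n).2.2.1 s hs)
            · exact (hG1 s).continuousOn.mul ((hext n).2.1 s hs)
            · intro z hz
              rw [hGeq z hz s hs, hPeq n s hs z hz]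
        _ = 0 := by rw [hzero0, mul_zero]
  -- the trace identity
  have htr : ∀ n : ℕ, kTrace ρ (kPow ρ (fun a b => L₁ a b + L₂ a b) n)
      = kTrace ρ (kPow ρ L₁ n) := by
    intro n
    have hPdiag : ContinuousOn (fun η => kPow ρ L₁ n η η) (Metric.sphere (0:ℂ) ρ) :=
      (hPjoint n).comp (continuous_id.prodMk continuous_id).continuousOn
        (fun η hη => ⟨hη, hη⟩)
    have hRdiag : ContinuousOn (fun η => Rex ρ L₁ L₂ n η η) (Metric.sphere (0:ℂ) ρ) := by
      cases n with
      | zero =>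
        simp only [Rex]
        exact hc₂.comp (continuous_id.prodMk continuous_id).continuousOn
          (fun η hη => ⟨hη, hη⟩)
      | succ n =>
        have key : ContinuousOn
            (fun η => (2 * ↑Real.pi * I)⁻¹ * ∮ s in C(0, ρ), L₂ η s * kPow ρ L₁ n s η)
            (Metric.sphere (0:ℂ) ρ) := by
          refine continuousOn_const.mul ?_
          apply paramCont (X := ℂ) hρ (B := M₂ * (M₁ * (ρ * M₁)^n))
          · intro s hs
            exact (sec₁ hc₂ hs).mul (hPcont₂ n s hs)
          · intro η hη
            exact (sec₂ hc₂ hη).mul (hPcont₁ n η hη)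
          · intro s hs η hη
            rw [norm_mul]
            exact mul_le_mul (hM₂ η hη s hs) (hPbd n s hs η hη) (norm_nonneg _) hM₂0
        refine key.congr ?_
        intro η hη
        rw [Rex]
        rfl
    simp only [kTrace]
    have hstep : (∮ η in C(0, ρ), kPow ρ (fun a b => L₁ a b + L₂ a b) n η η)
        = (∮ η in C(0, ρ), kPow ρ L₁ n η η) + ∮ η in C(0, ρ), Rex ρ L₁ L₂ n η η := by
      refine Eq.trans (circleIntegral.integral_congr hρ.le (g := fun η =>
        kPow ρ L₁ n η η + Rex ρ L₁ L₂ n η η) (fun η hη => hker n η hη η hη)) ?_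
      exact cint_add (hPdiag.circleIntegrable hρ.le) (hRdiag.circleIntegrable hρ.le)
    rw [hstep, htrRex n, add_zero]
  refine ⟨?_, ?_, ?_, htr, ?_⟩
  · -- L₁ L₂ = 0
    intro η hη η'' hη''
    have h0 : (∮ ζ in C(0, ρ), L₁ η ζ * L₂ ζ η'') = 0 := by
      apply czero hρ (f := fun w => g' η w * G w η'')
      · exact ((hg'd η hη).mono ball_subset_closedBall).mul
          ((hG1 η'').mono ball_subset_closedBall)
      · exact (hg'd η hη).continuousOn.mul (hG1 η'').continuousOn
      · intro z hz
        rw [hg'eq η hη z hz, hGeq z hz η'' hη'']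
    simp only [kComp, h0, mul_zero]
  · -- L₂ L₂ = 0
    intro η hη η'' hη''
    have h0 : (∮ ζ in C(0, ρ), L₂ η ζ * L₂ ζ η'') = 0 := by
      apply czero hρ (f := fun w => G η w * G w η'')
      · exact ((hG2 η).mono ball_subset_closedBall).mul
          ((hG1 η'').mono ball_subset_closedBall)
      · exact (hG2 η).continuousOn.mul (hG1 η'').continuousOn
      · intro z hz
        rw [hGeq η hη z hz, hGeq z hz η'' hη'']
    simp only [kComp, h0, mul_zero]
  · -- trace of L₂ vanishes
    simp only [kTrace, htrL₂, mul_zero]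
  · -- determinants agree
    exact congrArg Complex.exp (congrArg Neg.neg (tsum_congr fun n => by rw [htr n]))
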